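/- (Negative energy of the explicit radial profile.) Let d ≥ 1 be an integer, σ > 0, let f : ℝ → ℝ be bistable with threshold θ satisfying condition (1) with θ_c, and let α ∈ (θ_c,1]. Let R > 0 satisfy R + 1 ≥ R_α. Then ∫₀^R (−F(α))·r^{d−1} dr + ∫_R^{R+1} (σα²/2 − F(α(R+1−r)))·r^{d−1} dr < 0. (This quantity equals ∫₀^∞ (σ/2·φ_R'(r)² − F(φ_R(r)))·r^{d−1} dr for the profile φ_R(r) = α on [0,R], φ_R(r) = α(R+1−r) on [R,R+1], φ_R(r) = 0 for r ≥ R+1, so the profile φ_R has negative energy.) -/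
import Mathlib


open Set MeasureTheory

/-- `f` is bistable with threshold `θ`. -/
def Bistable (f : ℝ → ℝ) (θ : ℝ) : Prop :=
  Continuous f ∧ θ ∈ Set.Ioo (0:ℝ) 1 ∧ f 0 = 0 ∧ f θ = 0 ∧ f 1 = 0 ∧
  (∀ p ∈ Set.Ioo 0 θ, f p < 0) ∧ (∀ p ∈ Set.Ioo θ 1, f p > 0)

/-- `F(z) = ∫₀^z f`. -/
noncomputable def Fint (f : ℝ → ℝ) (z : ℝ) : ℝ := ∫ ξ in (0:ℝ)..z, f ξ
/-- The radius `R_α`. -/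
noncomputable def Ralpha (d : ℕ) (σ : ℝ) (f : ℝ → ℝ) (θ α : ℝ) : ℝ :=
  ((1 + 2 * Fint f α / (σ * α ^ 2 - 2 * Fint f θ)) ^ ((1:ℝ)/d) - 1)⁻¹ + 1

set_option maxHeartbeats 1600000 in
/-- Negative energy of the explicit radial profile `φ_R`: if `R + 1 ≥ R_α` then
`∫₀^R (-F(α)) r^{d-1} dr + ∫_R^{R+1} (σα²/2 - F(α(R+1-r))) r^{d-1} dr < 0`. -/
theorem energy_of_profile_neg
    (d : ℕ) (hd : 1 ≤ d) (σ : ℝ) (hσ : 0 < σ)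
    (f : ℝ → ℝ) (θ θc : ℝ) (hbi : Bistable f θ)
    (hθc : θc ∈ Set.Ioo θ 1) (hFθc : Fint f θc = 0)
    (α : ℝ) (hα : α ∈ Set.Ioc θc 1)
    (R : ℝ) (hR : 0 < R) (hRα : R + 1 ≥ Ralpha d σ f θ α) :
    (∫ r in (0:ℝ)..R, (-(Fint f α)) * r ^ (d - 1)) +
      (∫ r in R..(R + 1), (σ * α ^ 2 / 2 - Fint f (α * (R + 1 - r))) * r ^ (d - 1)) < 0 := by
  obtain ⟨hf, ⟨hθ0, hθ1⟩, hf0, hfθ, hf1, hneg, hpos⟩ := hbi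
  obtain ⟨hθθc, hθc1⟩ := hθc
  obtain ⟨hθcα, hα1⟩ := hα
  have hθcpos : 0 < θc := hθ0.trans hθθc
  have hαpos : 0 < α := hθcpos.trans hθcα
  have hdpos : (0:ℝ) < d := by exact_mod_cast hd
  have hdsub : d - 1 + 1 = d := Nat.sub_add_cancel hd
  -- continuity of F
  have hFcont : Continuous (Fint f) :=
    intervalIntegral.continuous_primitive (fun a b => hf.intervalIntegrable a b) 0
  -- sign facts about f
  have hfnonneg : ∀ p ∈ Icc θ 1, 0 ≤ f p := by
    intro p hp
    rcases eq_or_lt_of_le hp.1 with h | h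
    · rw [← h, hfθ]
    rcases eq_or_lt_of_le hp.2 with h2 | h2
    · rw [h2, hf1]
    · exact (hpos p ⟨h, h2⟩).le
  have hfnonpos : ∀ p ∈ Icc 0 θ, f p ≤ 0 := by
    intro p hp
    rcases eq_or_lt_of_le hp.1 with h | h
    · rw [← h, hf0]
    rcases eq_or_lt_of_le hp.2 with h2 | h2
    · rw [h2, hfθ]
    · exact (hneg p ⟨h, h2⟩).le
  -- F α > 0
  have hFα : 0 < Fint f α := by
    have hsplit : Fint f θc + (∫ x in θc..α, f x) = Fint f α :=
      intervalIntegral.integral_add_adjacent_intervals (hf.intervalIntegrable 0 θc)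
        (hf.intervalIntegrable θc α)
    have hipos : 0 < ∫ x in θc..α, f x := by
      apply intervalIntegral.intervalIntegral_pos_of_pos_on (hf.intervalIntegrable θc α)
        _ hθcα
      intro x hx
      exact hpos x ⟨hθθc.trans hx.1, hx.2.trans_le hα1⟩
    rw [← hsplit, hFθc]
    linarith
  -- F θ < 0
  have hFθ : Fint f θ < 0 := by
    have : (0:ℝ) < ∫ x in (0:ℝ)..θ, -f x := by
      apply intervalIntegral.intervalIntegral_pos_of_pos_on
        ((hf.neg).intervalIntegrable 0 θ) _ hθ0
      intro x hx
      simpa using hneg x hx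
    rw [intervalIntegral.integral_neg] at this
    unfold Fint
    linarith
  -- F(z) ≥ F(θ) for z ∈ [0, α]
  have hFmin : ∀ z ∈ Icc (0:ℝ) α, Fint f θ ≤ Fint f z := by
    intro z hz
    rcases le_total θ z with h | h
    · have hsplit : Fint f θ + (∫ x in θ..z, f x) = Fint f z :=
        intervalIntegral.integral_add_adjacent_intervals (hf.intervalIntegrable 0 θ)
          (hf.intervalIntegrable θ z)
      have : 0 ≤ ∫ x in θ..z, f x := by
        apply intervalIntegral.integral_nonneg h
        intro u hu
        exact hfnonneg u ⟨hu.1, hu.2.trans (hz.2.trans hα1)⟩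
      linarith
    · have hsplit : Fint f z + (∫ x in z..θ, f x) = Fint f θ :=
        intervalIntegral.integral_add_adjacent_intervals (hf.intervalIntegrable 0 z)
          (hf.intervalIntegrable z θ)
      have : (∫ x in z..θ, f x) ≤ 0 := by
        have h0 : 0 ≤ ∫ x in z..θ, -f x := by
          apply intervalIntegral.integral_nonneg h
          intro u hu
          simpa using hfnonpos u ⟨hz.1.trans hu.1, hu.2⟩
        rw [intervalIntegral.integral_neg] at h0
        linarith
      linarith
  -- key algebraic inequality from hRα
  have hD : 0 < σ * α ^ 2 - 2 * Fint f θ := by nlinarith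
  obtain ⟨D, hDdef⟩ : ∃ D : ℝ, D = σ * α ^ 2 - 2 * Fint f θ := ⟨_, rfl⟩
  obtain ⟨x, hxdef⟩ : ∃ x : ℝ, x = 1 + 2 * Fint f α / D := ⟨_, rfl⟩
  obtain ⟨c, hcdef⟩ : ∃ c : ℝ, c = x ^ ((1:ℝ)/d) := ⟨_, rfl⟩
  rw [← hDdef] at hD
  have hx1 : 1 < x := by
    have h2 : 0 < 2 * Fint f α / D := by positivity
    linarith [hxdef.ge, hxdef.le, h2]
  have hx0 : (0:ℝ) < x := by linarith
  have hc1 : 1 < c := by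
    rw [hcdef]
    exact (Real.one_lt_rpow_iff_of_pos hx0).mpr (Or.inl ⟨hx1, by positivity⟩)
  have hcd : c ^ d = x := by
    rw [hcdef, ← Real.rpow_natCast (x ^ ((1:ℝ)/d)) d, ← Real.rpow_mul hx0.le]
    rw [one_div, inv_mul_cancel₀ (by exact_mod_cast hdpos.ne' : (d:ℝ) ≠ 0), Real.rpow_one]
  have hRge : (c - 1)⁻¹ ≤ R := by
    rw [Ralpha, ← hDdef, ← hxdef, ← hcdef] at hRα
    linarith
  have hRc : R + 1 ≤ R * c := by
    have hc0 : 0 < c - 1 := by linarith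
    have h1 : (c - 1)⁻¹ * (c - 1) ≤ R * (c - 1) :=
      mul_le_mul_of_nonneg_right hRge hc0.le
    rw [inv_mul_cancel₀ hc0.ne'] at h1
    nlinarith
  have hpw : (R + 1) ^ d ≤ R ^ d * x := by
    have h1 : (R + 1) ^ d ≤ (R * c) ^ d := pow_le_pow_left₀ (by linarith) hRc d
    rw [mul_pow, hcd] at h1
    exact h1
  have hkey : D * (R + 1) ^ d ≤ R ^ d * (D + 2 * Fint f α) := by
    have hDne : D ≠ 0 := ne_of_gt hD
    have hDx : D * x = D + 2 * Fint f α := by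
      rw [hxdef]; field_simp
    have h2 := mul_le_mul_of_nonneg_left hpw hD.le
    rw [hDdef] at h2 ⊢
    calc (σ * α ^ 2 - 2 * Fint f θ) * (R + 1) ^ d
        ≤ (σ * α ^ 2 - 2 * Fint f θ) * (R ^ d * x) := h2
      _ = R ^ d * (D * x) := by rw [hDdef]; ring
      _ = R ^ d * ((σ * α ^ 2 - 2 * Fint f θ) + 2 * Fint f α) := by rw [hDx, hDdef]
  have keyineq : (σ * α ^ 2 / 2 - Fint f θ) * ((R + 1) ^ d - R ^ d) ≤ Fint f α * R ^ d := by
    rw [hDdef] at hkey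
    nlinarith [hkey]
  -- compute the first integral
  have hcast : ((d - 1 : ℕ) : ℝ) + 1 = d := by
    rw [Nat.cast_sub hd]; push_cast; ring
  have hI1 : (∫ r in (0:ℝ)..R, (-(Fint f α)) * r ^ (d - 1)) = -(Fint f α) * (R ^ d / d) := by
    rw [intervalIntegral.integral_const_mul, integral_pow, hdsub, hcast]
    rw [zero_pow (by omega : d ≠ 0)]
    ring
  -- split the second integral
  have hcont2 : Continuous fun r : ℝ => Fint f (α * (R + 1 - r)) :=
    hFcont.comp (continuous_const.mul (continuous_const.sub continuous_id))
  have hint1 : IntervalIntegrable (fun r : ℝ => (σ * α ^ 2 / 2 - Fint f θ) * r ^ (d - 1))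
      volume R (R + 1) :=
    (continuous_const.mul (continuous_pow (d - 1))).intervalIntegrable _ _
  have hint2 : IntervalIntegrable
      (fun r : ℝ => (Fint f (α * (R + 1 - r)) - Fint f θ) * r ^ (d - 1)) volume R (R + 1) :=
    ((hcont2.sub continuous_const).mul (continuous_pow (d - 1))).intervalIntegrable _ _
  have hsplit2 : (∫ r in R..(R + 1), (σ * α ^ 2 / 2 - Fint f (α * (R + 1 - r))) * r ^ (d - 1))
      = (∫ r in R..(R + 1), (σ * α ^ 2 / 2 - Fint f θ) * r ^ (d - 1))
        - (∫ r in R..(R + 1), (Fint f (α * (R + 1 - r)) - Fint f θ) * r ^ (d - 1)) := by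
    rw [← intervalIntegral.integral_sub hint1 hint2]
    refine intervalIntegral.integral_congr fun r _ => by ring
  have hI2a : (∫ r in R..(R + 1), (σ * α ^ 2 / 2 - Fint f θ) * r ^ (d - 1))
      = (σ * α ^ 2 / 2 - Fint f θ) * (((R + 1) ^ d - R ^ d) / d) := by
    rw [intervalIntegral.integral_const_mul, integral_pow, hdsub, hcast]
  -- positivity of the correction term
  have hnonneg : ∀ r ∈ Icc R (R + 1), 0 ≤ (Fint f (α * (R + 1 - r)) - Fint f θ) * r ^ (d - 1) := by
    intro r hr
    apply mul_nonneg
    · have hz : α * (R + 1 - r) ∈ Icc (0:ℝ) α := by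
        constructor
        · apply mul_nonneg hαpos.le; linarith [hr.2]
        · nlinarith [hr.1, hr.2]
      linarith [hFmin _ hz]
    · exact pow_nonneg (hR.le.trans hr.1) _
  have hIpos : 0 < ∫ r in R..(R + 1), (Fint f (α * (R + 1 - r)) - Fint f θ) * r ^ (d - 1) := by
    -- find a small interval near R where the integrand is positive
    have hcR : ContinuousAt (fun r : ℝ => Fint f (α * (R + 1 - r)) - Fint f θ)
        R := (hcont2.sub continuous_const).continuousAt
    have hvalR : 0 < Fint f (α * (R + 1 - R)) - Fint f θ := by
      have : α * (R + 1 - R) = α := by ring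
      rw [this]; linarith
    have hev : ∀ᶠ r in nhds R, 0 < Fint f (α * (R + 1 - r)) - Fint f θ :=
      hcR.eventually (eventually_gt_nhds hvalR)
    obtain ⟨ε, hε, hball⟩ := Metric.eventually_nhds_iff.mp hev
    obtain ⟨δ, hδdef⟩ : ∃ δ : ℝ, δ = min ε 1 := ⟨_, rfl⟩
    have hδ0 : 0 < δ := hδdef ▸ lt_min hε one_pos
    have hδ1 : δ ≤ 1 := hδdef ▸ min_le_right _ _
    have hδε : δ ≤ ε := hδdef ▸ min_le_left _ _
    obtain ⟨R', hR'def⟩ : ∃ R' : ℝ, R' = R + δ / 2 := ⟨_, rfl⟩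
    have hRR' : R < R' := by rw [hR'def]; linarith
    have hR'le : R' ≤ R + 1 := by rw [hR'def]; linarith
    have hadd : (∫ r in R..R', (Fint f (α * (R + 1 - r)) - Fint f θ) * r ^ (d - 1))
        + (∫ r in R'..(R + 1), (Fint f (α * (R + 1 - r)) - Fint f θ) * r ^ (d - 1))
        = ∫ r in R..(R + 1), (Fint f (α * (R + 1 - r)) - Fint f θ) * r ^ (d - 1) :=
      intervalIntegral.integral_add_adjacent_intervals
        (((hcont2.sub continuous_const).mul (continuous_pow (d - 1))).intervalIntegrable _ _)
        (((hcont2.sub continuous_const).mul (continuous_pow (d - 1))).intervalIntegrable _ _)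
    have hpart1 : 0 < ∫ r in R..R', (Fint f (α * (R + 1 - r)) - Fint f θ) * r ^ (d - 1) := by
      apply intervalIntegral.intervalIntegral_pos_of_pos_on
        (((hcont2.sub continuous_const).mul (continuous_pow (d - 1))).intervalIntegrable _ _)
        _ hRR'
      intro r hr
      have hdist : dist r R < ε := by
        rw [Real.dist_eq, abs_lt]
        constructor
        · linarith [hr.1]
        · have h2 : r < R + δ / 2 := hR'def ▸ hr.2
          linarith
      apply mul_pos (hball hdist)
      have : 0 < r := hR.trans hr.1
      positivity
    have hpart2 : 0 ≤ ∫ r in R'..(R + 1), (Fint f (α * (R + 1 - r)) - Fint f θ) * r ^ (d - 1) := by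
      apply intervalIntegral.integral_nonneg hR'le
      intro u hu
      exact hnonneg u ⟨hRR'.le.trans hu.1, hu.2⟩
    linarith [hadd, hpart1, hpart2]
  -- conclude
  rw [hI1, hsplit2, hI2a]
  have heq : -(Fint f α) * (R ^ d / d) + (σ * α ^ 2 / 2 - Fint f θ) * (((R + 1) ^ d - R ^ d) / d)
      = ((σ * α ^ 2 / 2 - Fint f θ) * ((R + 1) ^ d - R ^ d) - Fint f α * R ^ d) / d := by ring
  have hle : ((σ * α ^ 2 / 2 - Fint f θ) * ((R + 1) ^ d - R ^ d) - Fint f α * R ^ d) / d ≤ 0 :=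
    div_nonpos_iff.mpr (Or.inr ⟨by linarith [keyineq], hdpos.le⟩)
  linarith [hIpos, heq, hle]
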